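/- Let v₁, v₂ ∈ ℍ(ℚ) be linearly independent over ℚ, let L be their ℚ-span, set a₁ = a₁(v₁,v₂), a₂ = a₂(v₁,v₂), and let g ∈ ℍ(ℚ) be nonzero with a₂·g = g·a₁. Let α, β ∈ ℍ(ℚ) satisfy Nr(α) = Nr(β) = 1. Then α·x·conj β = x for all x ∈ L if and only if α·a₁ = a₁·α and β·g = g·α. -/

import Mathlib

set_option maxHeartbeats 1000000

open Quaternion

/-- If `x q = q' x` and `re q = re q'`, then `x` intertwines the imaginary parts, too. -/
lemma stmt5_im_swap {x q q' : ℍ[ℚ]} (hre : q.re = q'.re) (h : x * q = q' * x) :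
    x * q.im = q'.im * x := by
  rw [eq_sub_of_add_eq' q.re_add_im, eq_sub_of_add_eq' q'.re_add_im, mul_sub, sub_mul, h, hre,
    Quaternion.mul_coe_eq_smul, Quaternion.coe_mul_eq_smul]

/-- If `x` commutes with a nonzero pure quaternion `p`, then `im x` is a multiple of `p`. -/
lemma stmt5_decomp {p x : ℍ[ℚ]} (hp : p.re = 0) (hp0 : p ≠ 0) (hx : x * p = p * x) :
    ∃ c : ℚ, x.im = c • p := by
  have hqp : p * x.im = x.im * p := stmt5_im_swap rfl hx.symm
  have hqre : x.im.re = 0 := Quaternion.re_im (a := x)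
  have hstar : star (x.im * p) = x.im * p := by
    rw [star_mul, Quaternion.star_eq_neg.2 hp, Quaternion.star_eq_neg.2 hqre, neg_mul_neg, hqp]
  have hreal := Quaternion.star_eq_self.1 hstar
  have hnp : normSq p ≠ 0 := Quaternion.normSq_ne_zero.2 hp0
  have h1 : normSq p • x.im = -((x.im * p).re • p) := by
    conv_lhs => rw [← Quaternion.mul_coe_eq_smul, ← Quaternion.self_mul_star p, ← mul_assoc,
      hreal, Quaternion.star_eq_neg.2 hp, mul_neg, Quaternion.coe_mul_eq_smul]
  refine ⟨-((x.im * p).re) / normSq p, ?_⟩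
  calc x.im = ((normSq p)⁻¹ * normSq p) • x.im := by rw [inv_mul_cancel₀ hnp, one_smul]
    _ = (normSq p)⁻¹ • (normSq p • x.im) := mul_smul _ _ _
    _ = (normSq p)⁻¹ • (-((x.im * p).re • p)) := by rw [h1]
    _ = (-((x.im * p).re) / normSq p) • p := by
        rw [smul_neg, smul_smul, ← neg_smul]; congr 1; ring

/-- Two quaternions commuting with the same nonzero pure quaternion commute. -/
lemma stmt5_commute {p x y : ℍ[ℚ]} (hp : p.re = 0) (hp0 : p ≠ 0)
    (hx : x * p = p * x) (hy : y * p = p * y) : x * y = y * x := by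
  obtain ⟨c, hc⟩ := stmt5_decomp hp hp0 hx
  obtain ⟨d, hd⟩ := stmt5_decomp hp hp0 hy
  have hx' := x.re_add_im.symm
  have hy' := y.re_add_im.symm
  rw [hc] at hx'
  rw [hd] at hy'
  rw [hx', hy']
  ext <;>
    simp [Quaternion.re_mul, Quaternion.imI_mul, Quaternion.imJ_mul, Quaternion.imK_mul] <;>
    ring

lemma stmt5_conj_swap {u a b : ℍ[ℚ]} (hu : u ≠ 0) (h : u * a = b * u) :
    a * u⁻¹ = u⁻¹ * b := by
  apply mul_left_cancel₀ hu
  rw [← mul_assoc, h, mul_assoc, mul_inv_cancel₀ hu, mul_one, ← mul_assoc,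
    mul_inv_cancel₀ hu, one_mul]

/-- Let `v₁, v₂ ∈ ℍ(ℚ)` be linearly independent with `ℚ`-span `L`, put
`a₁ = Im(v₁ conj v₂)`, `a₂ = Im(conj v₂ * v₁)`, and let `g ≠ 0` satisfy `a₂ g = g a₁`.
If `Nr α = Nr β = 1`, then `α x conj β = x` for all `x ∈ L` iff
`α a₁ = a₁ α` and `β g = g α`. -/
theorem stmt_5 (v₁ v₂ : ℍ[ℚ]) (hli : LinearIndependent ℚ ![v₁, v₂])
    (g : ℍ[ℚ]) (hg : g ≠ 0)
    (hg2 : (star v₂ * v₁).im * g = g * (v₁ * star v₂).im)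
    (α β : ℍ[ℚ]) (hα : Quaternion.normSq α = 1) (hβ : Quaternion.normSq β = 1) :
    (∀ x ∈ Submodule.span ℚ ({v₁, v₂} : Set ℍ[ℚ]), α * x * star β = x) ↔
      (α * (v₁ * star v₂).im = (v₁ * star v₂).im * α ∧ β * g = g * α) := by
  have hfin := linearIndependent_fin2.mp hli
  simp only [Matrix.cons_val_one, Matrix.head_cons, Matrix.cons_val_zero] at hfin
  obtain ⟨hv₂, hv₁⟩ := hfin
  have hNv₂ : normSq v₂ ≠ 0 := Quaternion.normSq_ne_zero.2 hv₂
  have hre : (v₁ * star v₂).re = (star v₂ * v₁).re := by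
    simp only [Quaternion.re_mul, Quaternion.re_star, Quaternion.imI_star,
      Quaternion.imJ_star, Quaternion.imK_star]
    ring
  have hpure₁ : (v₁ * star v₂).im.re = 0 := Quaternion.re_im _
  have hpure₂ : (star v₂ * v₁).im.re = 0 := Quaternion.re_im _
  have hscal : ∀ r : ℚ, normSq v₂ • v₁ = r • v₂ → False := by
    intro r h
    apply hv₁ (r / normSq v₂)
    calc (r / normSq v₂) • v₂ = (normSq v₂)⁻¹ • (r • v₂) := by
          rw [div_eq_inv_mul, ← smul_smul]
      _ = (normSq v₂)⁻¹ • (normSq v₂ • v₁) := by rw [← h]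
      _ = v₁ := by rw [smul_smul, inv_mul_cancel₀ hNv₂, one_smul]
  have ha₁0 : (v₁ * star v₂).im ≠ 0 := by
    intro h
    have h1 := (v₁ * star v₂).re_add_im
    rw [h, add_zero] at h1
    refine hscal (v₁ * star v₂).re ?_
    conv_lhs => rw [← Quaternion.mul_coe_eq_smul, ← Quaternion.star_mul_self v₂, ← mul_assoc,
      ← h1, Quaternion.coe_mul_eq_smul]
  have ha₂0 : (star v₂ * v₁).im ≠ 0 := by
    intro h
    have h1 := (star v₂ * v₁).re_add_im
    rw [h, add_zero] at h1
    refine hscal (star v₂ * v₁).re ?_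
    conv_lhs => rw [← Quaternion.coe_mul_eq_smul, ← Quaternion.self_mul_star v₂, mul_assoc,
      ← h1, Quaternion.mul_coe_eq_smul]
  -- intertwining identities
  have I1 : v₁ * (star v₂ * v₁).im = (v₁ * star v₂).im * v₁ :=
    stmt5_im_swap hre.symm (mul_assoc v₁ (star v₂) v₁).symm
  have I2 : v₂ * (star v₂ * v₁).im = (v₁ * star v₂).im * v₂ := by
    refine stmt5_im_swap hre.symm ?_
    rw [← mul_assoc, Quaternion.self_mul_star, mul_assoc, Quaternion.star_mul_self,
      Quaternion.coe_mul_eq_smul, Quaternion.mul_coe_eq_smul]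
  have I3 : star v₂ * (v₁ * star v₂).im = (star v₂ * v₁).im * star v₂ :=
    stmt5_im_swap hre (mul_assoc (star v₂) v₁ (star v₂)).symm
  -- norm facts
  have hβ1 : β * star β = 1 := by
    rw [Quaternion.self_mul_star, hβ, Quaternion.coe_one]
  have hβ2 : star β * β = 1 := by
    rw [Quaternion.star_mul_self, hβ, Quaternion.coe_one]
  have hα2 : star α * α = 1 := by
    rw [Quaternion.star_mul_self, hα, Quaternion.coe_one]
  constructor
  · intro h
    have h1 : α * v₁ * star β = v₁ := h v₁ (Submodule.subset_span (by simp))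
    have h2 : α * v₂ * star β = v₂ := h v₂ (Submodule.subset_span (by simp))
    have e1 : α * v₁ = v₁ * β := by
      calc α * v₁ = α * v₁ * (star β * β) := by rw [hβ2, mul_one]
        _ = (α * v₁ * star β) * β := by simp only [mul_assoc]
        _ = v₁ * β := by rw [h1]
    have e2 : α * v₂ = v₂ * β := by
      calc α * v₂ = α * v₂ * (star β * β) := by rw [hβ2, mul_one]
        _ = (α * v₂ * star β) * β := by simp only [mul_assoc]
        _ = v₂ * β := by rw [h2]
    have e2' : star v₂ * star α = star β * star v₂ := by
      have := congrArg star e2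
      rwa [star_mul, star_mul] at this
    have e3 : star v₂ * α = β * star v₂ := by
      calc star v₂ * α = (β * star β) * (star v₂ * α) := by rw [hβ1, one_mul]
        _ = β * (star β * star v₂ * α) := by simp only [mul_assoc]
        _ = β * (star v₂ * star α * α) := by rw [← e2']
        _ = β * (star v₂ * (star α * α)) := by simp only [mul_assoc]
        _ = β * star v₂ := by rw [hα2, mul_one]
    constructor
    · refine stmt5_im_swap rfl ?_
      calc α * (v₁ * star v₂) = (α * v₁) * star v₂ := (mul_assoc _ _ _).symm
        _ = v₁ * (β * star v₂) := by rw [e1, mul_assoc]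
        _ = v₁ * (star v₂ * α) := by rw [← e3]
        _ = (v₁ * star v₂) * α := (mul_assoc _ _ _).symm
    · have hβa₂ : β * (star v₂ * v₁).im = (star v₂ * v₁).im * β := by
        refine stmt5_im_swap rfl ?_
        calc β * (star v₂ * v₁) = (β * star v₂) * v₁ := (mul_assoc _ _ _).symm
          _ = star v₂ * (α * v₁) := by rw [← e3, mul_assoc]
          _ = star v₂ * (v₁ * β) := by rw [e1]
          _ = (star v₂ * v₁) * β := (mul_assoc _ _ _).symm
      have hsv : star v₂ ≠ 0 := star_ne_zero.mpr hv₂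
      have i : (v₁ * star v₂).im * (star v₂)⁻¹ = (star v₂)⁻¹ * (star v₂ * v₁).im :=
        stmt5_conj_swap hsv I3
      have hcomm : (g * (star v₂)⁻¹) * (star v₂ * v₁).im
          = (star v₂ * v₁).im * (g * (star v₂)⁻¹) := by
        calc (g * (star v₂)⁻¹) * (star v₂ * v₁).im
            = g * ((star v₂)⁻¹ * (star v₂ * v₁).im) := mul_assoc _ _ _
          _ = g * ((v₁ * star v₂).im * (star v₂)⁻¹) := by rw [← i]
          _ = (g * (v₁ * star v₂).im) * (star v₂)⁻¹ := (mul_assoc _ _ _).symm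
          _ = ((star v₂ * v₁).im * g) * (star v₂)⁻¹ := by rw [← hg2]
          _ = (star v₂ * v₁).im * (g * (star v₂)⁻¹) := mul_assoc _ _ _
      have hcb : β * (g * (star v₂)⁻¹) = (g * (star v₂)⁻¹) * β :=
        stmt5_commute hpure₂ ha₂0 hβa₂ hcomm
      calc β * g = β * ((g * (star v₂)⁻¹) * star v₂) := by
            rw [mul_assoc, inv_mul_cancel₀ hsv, mul_one]
        _ = (β * (g * (star v₂)⁻¹)) * star v₂ := (mul_assoc _ _ _).symm
        _ = ((g * (star v₂)⁻¹) * β) * star v₂ := by rw [hcb]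
        _ = (g * (star v₂)⁻¹) * (β * star v₂) := mul_assoc _ _ _
        _ = (g * (star v₂)⁻¹) * (star v₂ * α) := by rw [← e3]
        _ = g * ((star v₂)⁻¹ * (star v₂ * α)) := mul_assoc _ _ _
        _ = g * (((star v₂)⁻¹ * star v₂) * α) := by simp only [mul_assoc]
        _ = g * α := by rw [inv_mul_cancel₀ hsv, one_mul]
  · rintro ⟨hc, hbg⟩
    have key : ∀ v : ℍ[ℚ], v * (star v₂ * v₁).im = (v₁ * star v₂).im * v →
        α * v * star β = v := by
      intro v hv
      have hvg : (v * g) * (v₁ * star v₂).im = (v₁ * star v₂).im * (v * g) := by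
        calc (v * g) * (v₁ * star v₂).im = v * (g * (v₁ * star v₂).im) := mul_assoc _ _ _
          _ = v * ((star v₂ * v₁).im * g) := by rw [← hg2]
          _ = (v * (star v₂ * v₁).im) * g := (mul_assoc _ _ _).symm
          _ = ((v₁ * star v₂).im * v) * g := by rw [hv]
          _ = (v₁ * star v₂).im * (v * g) := mul_assoc _ _ _
      have hcom : α * (v * g) = (v * g) * α := stmt5_commute hpure₁ ha₁0 hc hvg
      have hvβ : (α * v) * g = (v * β) * g := by
        calc (α * v) * g = α * (v * g) := mul_assoc _ _ _
          _ = (v * g) * α := hcom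
          _ = v * (g * α) := mul_assoc _ _ _
          _ = v * (β * g) := by rw [← hbg]
          _ = (v * β) * g := (mul_assoc _ _ _).symm
      have hv' : α * v = v * β := mul_right_cancel₀ hg hvβ
      calc α * v * star β = (v * β) * star β := by rw [hv']
        _ = v * (β * star β) := mul_assoc _ _ _
        _ = v := by rw [hβ1, mul_one]
    intro x hx
    induction hx using Submodule.span_induction with
    | mem x h =>
        rcases h with h | h
        · subst h; exact key _ I1
        · rw [Set.mem_singleton_iff] at h; subst h; exact key _ I2
    | zero => simp
    | add x y hx' hy' px py => rw [mul_add, add_mul, px, py]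
    | smul a x hx' px => rw [mul_smul_comm, smul_mul_assoc, px]
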